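/- Assume le is transitive and total (for all a b, le a b = true or le b a = true). If qsp steps k l le = Some (l1, v, l2), then for every x in l1, le x v = true. -/

import Mathlib

/-- `le` is transitive and total. -/
def le_props {X : Type} (le : X → X → Bool) : Prop :=
  (∀ a b c, le a b = true → le b c = true → le a c = true) ∧
  (∀ a b, le a b = true ∨ le b a = true)

/-- Fueled quickselect. -/
def qsp {X : Type} : Nat → Nat → List X → (X → X → Bool) → Option (List X × X × List X)
  | 0, _, _, _ => none
  | steps + 1, k, l, le =>
    match l with
    | [] => none
    | pivot :: lst =>
      let sm := lst.filter (fun x => le x pivot && !le pivot x)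
      let eq := lst.filter (fun x => le x pivot && le pivot x)
      let lg := lst.filter (fun x => !le x pivot)
      if k < sm.length then
        match qsp steps k sm le with
        | none => none
        | some (a, x, b) => some (a, x, b ++ ((pivot :: eq) ++ lg))
      else if sm.length + eq.length < k then
        match qsp steps (k - (sm.length + eq.length + 1)) lg le with
        | none => none
        | some (a, x, b) => some (a ++ (sm ++ (pivot :: eq)), x, b)
      else
        some (sm ++ eq.take (k - sm.length), pivot, eq.drop (k - sm.length) ++ lg)

def quick_select {X : Type} (k : Nat) (l : List X) (le : X → X → Bool) :
    Option (List X × X × List X) :=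
  qsp l.length k l le

/-- Data points are lists of naturals. -/
abbrev datapt : Type := List Nat

/-- k-d trees. -/
inductive kdtree : Type where
  | mt_tree : kdtree
  | node : Nat → datapt → kdtree → kdtree → kdtree

/-- Compare two data points on their `i`-th coordinate. -/
def ith_leb (i : Nat) (p q : datapt) : Bool := decide (p.getD i 0 ≤ q.getD i 0)

def median_partition (l : List datapt) (le : datapt → datapt → Bool) :
    Option (List datapt × datapt × List datapt) :=
  quick_select (l.length / 2) l le

def next_depth (k d : Nat) : Nat := (d + 1) % k

def build_kdtree_ : Nat → Nat → List datapt → Nat → kdtree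
  | 0, _, _, _ => .mt_tree
  | fuel + 1, k, data, depth_mod =>
    match data with
    | [] => .mt_tree
    | _ :: _ =>
      match median_partition data (ith_leb depth_mod) with
      | none => .mt_tree
      | some (sm, pvt, lg) =>
        .node depth_mod pvt
          (build_kdtree_ fuel k sm (next_depth k depth_mod))
          (build_kdtree_ fuel k lg (next_depth k depth_mod))

def build_kdtree (k : Nat) (data : List datapt) : kdtree :=
  build_kdtree_ data.length k data 0

/-- Bounding boxes: lower and upper bounds per coordinate (`none` = unbounded). -/
structure bbox : Type where
  mins : List (Option Nat)
  maxs : List (Option Nat)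

def list_set {A : Type} (l : List A) (d : Nat) (v : A) : List A := l.set d v

def bb_split (bb : bbox) (d : Nat) (v : Nat) : bbox × bbox :=
  (⟨bb.mins, list_set bb.maxs d (some v)⟩, ⟨list_set bb.mins d (some v), bb.maxs⟩)

/-- Coordinatewise containment of a point in a bounding box. -/
def bb_contains (bb : bbox) (pt : datapt) : Bool :=
  (List.range pt.length).all (fun i =>
    (match bb.mins.getD i none with
     | none => true
     | some s => decide (s ≤ pt.getD i 0)) &&
    (match bb.maxs.getD i none with
     | none => true
     | some t => decide (pt.getD i 0 ≤ t)))

/-- Manhattan distance between two points (on naturals). -/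
def sum_dist (q p : datapt) : Nat :=
  (List.zipWith (fun a b => (a - b) + (b - a)) q p).sum

/-- Closest enclosed point: clamp each coordinate of `vs` into the box. -/
def cep (vs : datapt) (mins maxs : List (Option Nat)) : datapt :=
  (List.range vs.length).map (fun i =>
    let v := vs.getD i 0
    let v1 := match maxs.getD i none with | none => v | some t => min v t
    match mins.getD i none with | none => v1 | some s => max s v1)

def kdtree_bounded : kdtree → bbox → Bool
  | .mt_tree, _ => true
  | .node ax pt lft rgt, bb =>
    bb_contains bb pt &&
    kdtree_bounded lft (bb_split bb ax (pt.getD ax 0)).1 &&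
    kdtree_bounded rgt (bb_split bb ax (pt.getD ax 0)).2

inductive In_kdtree : datapt → kdtree → Prop where
  | in_root : ∀ ax pt lft rgt, In_kdtree pt (.node ax pt lft rgt)
  | in_left : ∀ v ax pt lft rgt, In_kdtree v lft → In_kdtree v (.node ax pt lft rgt)
  | in_right : ∀ v ax pt lft rgt, In_kdtree v rgt → In_kdtree v (.node ax pt lft rgt)

inductive Contents_kdtree : kdtree → List datapt → Prop where
  | cmt : Contents_kdtree .mt_tree []
  | cnode : ∀ ax pt lft rgt ll rl, Contents_kdtree lft ll → Contents_kdtree rgt rl →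
      Contents_kdtree (.node ax pt lft rgt) (pt :: (ll ++ rl))

/- A (max-)priority queue of elements of `A` keyed by `key : A → Nat`,
   implemented as an unsorted list. -/
abbrev priqueue (A : Type) (_key : A → Nat) : Type := List A

def pq_empty (A : Type) (key : A → Nat) : priqueue A key := []

def pq_insert {A : Type} (key : A → Nat) (e : A) (pq : priqueue A key) : priqueue A key :=
  e :: pq

def pq_size {A : Type} {key : A → Nat} (pq : priqueue A key) : Nat := pq.length

/-- Remove (one) element of maximal key: returns it and the rest. -/
def select_max {A : Type} (key : A → Nat) : A → List A → A × List A
  | x, [] => (x, [])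
  | x, y :: ys =>
    if key y ≤ key x then
      let p := select_max key x ys
      (p.1, y :: p.2)
    else
      let p := select_max key y ys
      (p.1, x :: p.2)

def delete_max {A : Type} (key : A → Nat) : priqueue A key → Option (A × priqueue A key)
  | [] => none
  | x :: xs => some (select_max key x xs)

def peek_max {A : Type} (key : A → Nat) (pq : priqueue A key) : Option A :=
  (delete_max key pq).map Prod.fst

/-- Representation invariant (trivial for the list implementation). -/
def priq {A : Type} (key : A → Nat) (_pq : priqueue A key) : Prop := True

/-- Abstraction relation between a priority queue and a list of its elements. -/
def PQAbs {A : Type} (key : A → Nat) (pq : priqueue A key) (l : List A) : Prop :=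
  pq.Perm l

/-- Insert, but keep the queue size bounded by `K` (discarding a max element). -/
def insert_bounded {A : Type} (K : Nat) (key : A → Nat) (e : A) (pq : priqueue A key) :
    priqueue A key :=
  let updpq := pq_insert key e pq
  if K < pq_size updpq then
    match delete_max key updpq with
    | none => updpq
    | some (_, updpq') => updpq'
  else updpq

/-- K-nearest-neighbor search over a k-d tree with bounding-box pruning. -/
def knn (K k : Nat) : kdtree → bbox → datapt → priqueue datapt (fun _ => 0) → List datapt
  | .mt_tree, _, _, pq => pq
  | .node ax pt lft rgt, bb, query, pq =>
    let prune : Bool :=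
      match peek_max (sum_dist query) pq with
      | none => false
      | some top =>
        decide (K ≤ pq.length) &&
        decide (sum_dist query top < sum_dist query (cep query bb.mins bb.maxs))
    if prune then pq
    else
      let pq0 := insert_bounded K (sum_dist query) pt pq
      let bbs := bb_split bb ax (pt.getD ax 0)
      if ith_leb ax pt query then
        knn K k rgt bbs.2 query (knn K k lft bbs.1 query pq0)
      else
        knn K k lft bbs.1 query (knn K k rgt bbs.2 query pq0)

def knn_search (K k : Nat) (tree : kdtree) (query : datapt) : List datapt :=
  knn K k tree ⟨List.replicate k none, List.replicate k none⟩ query []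

/-- Every element of `l1` has key ≤ every element of `l2`. -/
def all_in_leb {A : Type} (key : A → Nat) (l1 l2 : List A) : Prop :=
  ∀ e1 ∈ l1, ∀ e2 ∈ l2, key e1 ≤ key e2

/-- Drop the first `n` elements of a list. -/
def dropn {A : Type} : Nat → List A → List A
  | 0, lst => lst
  | _ + 1, [] => []
  | n + 1, _ :: t => dropn n t

theorem qsp_mem {X : Type} (steps : Nat) : ∀ (k : Nat) (l : List X) (le : X → X → Bool)
    (l1 l2 : List X) (v : X), qsp steps k l le = some (l1, v, l2) → v ∈ l := by
  induction steps with
  | zero => intro k l le l1 l2 v h; simp [qsp] at h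
  | succ n ih =>
    intro k l le l1 l2 v h
    match l with
    | [] => simp [qsp] at h
    | pivot :: lst =>
      simp only [qsp] at h
      split at h
      · split at h
        · exact absurd h (by simp)
        · rename_i a x b heq
          obtain ⟨rfl, rfl, rfl⟩ := by simpa using h
          have := ih _ _ _ _ _ _ heq
          have := (List.mem_filter.mp this).1
          exact List.mem_cons_of_mem _ this
      · split at h
        · split at h
          · exact absurd h (by simp)
          · rename_i a x b heq
            obtain ⟨rfl, rfl, rfl⟩ := by simpa using h
            have := ih _ _ _ _ _ _ heq
            have := (List.mem_filter.mp this).1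
            exact List.mem_cons_of_mem _ this
        · obtain ⟨rfl, rfl, rfl⟩ := by simpa using h
          exact List.mem_cons_self

theorem qsp_all_smaller {X : Type} (steps k : Nat) (l : List X) (le : X → X → Bool)
    (l1 l2 : List X) (v : X) (Hle : le_props le)
    (h : qsp steps k l le = some (l1, v, l2)) :
    ∀ x ∈ l1, le x v = true := by
  induction steps generalizing k l l1 l2 v with
  | zero => simp [qsp] at h
  | succ n ih =>
    match l with
    | [] => simp [qsp] at h
    | pivot :: lst =>
      obtain ⟨htrans, htot⟩ := Hle
      simp only [qsp] at h
      split at h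
      · split at h
        · exact absurd h (by simp)
        · rename_i a x b heq
          obtain ⟨rfl, rfl, rfl⟩ := by simpa using h
          exact ih _ _ _ _ _ heq
      · split at h
        · split at h
          · exact absurd h (by simp)
          · rename_i a w b heq
            obtain ⟨rfl, rfl, rfl⟩ := by simpa using h
            have hvmem := qsp_mem _ _ _ _ _ _ _ heq
            have hvlg : le w pivot = false := by
              have := (List.mem_filter.mp hvmem).2
              simpa using this
            have hpv : le pivot w = true := by
              rcases htot w pivot with h1 | h1
              · rw [hvlg] at h1; exact absurd h1 (by simp)
              · exact h1
            have key : ∀ y, le y pivot = true → le y w = true :=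
              fun y hy => htrans _ _ _ hy hpv
            intro x hx
            rw [List.mem_append] at hx
            rcases hx with hx | hx
            · exact ih _ _ _ _ _ heq x hx
            · rw [List.mem_append] at hx
              rcases hx with hx | hx
              · have := (List.mem_filter.mp hx).2
                simp at this
                exact key x this.1
              · rw [List.mem_cons] at hx
                rcases hx with rfl | hx
                · exact hpv
                · have := (List.mem_filter.mp hx).2
                  simp at this
                  exact key x this.1
        · obtain ⟨rfl, rfl, rfl⟩ := by simpa using h
          intro x hx
          rw [List.mem_append] at hx
          rcases hx with hx | hx
          · have := (List.mem_filter.mp hx).2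
            simp at this; exact this.1
          · have := (List.mem_filter.mp (List.mem_of_mem_take hx)).2
            simp at this; exact this.1
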